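/- Let t ≤ s ≤ d be integers, T ⊆ {0,1,...,s-1} a set of size t, and p > s a prime. Then the minrank over F_p of the generalized Kneser graph K(d,s,T) is at most C(d, s-t). -/

import Mathlib

open Finset Polynomial

private lemma alt_sum_choose (F : Type*) [Field F] (n : ℕ) :
    ∑ i ∈ range (n+1), (-1:F)^i * (n.choose i : F) = if n = 0 then 1 else 0 := by
  cases n with
  | zero => simp
  | succ n =>
    have h := add_pow (-1 : F) 1 (n+1)
    simp only [one_pow, mul_one, neg_add_cancel] at h
    rw [← h, zero_pow (Nat.succ_ne_zero n), if_neg (Nat.succ_ne_zero n)]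

private lemma degree_le_of_lt_succ {F : Type*} [Field F] {P : F[X]} {k : ℕ}
    (h : P.degree < ((k+1 : ℕ) : WithBot ℕ)) : P.degree ≤ (k : WithBot ℕ) := by
  rcases eq_or_ne P 0 with rfl | h0
  · simp
  · rw [degree_eq_natDegree h0] at h ⊢
    exact_mod_cast Nat.lt_succ_iff.mp (by exact_mod_cast h)

private lemma alt_sum_eval {F : Type*} [Field F] :
    ∀ (k : ℕ) (P : F[X]), P.degree < (k : WithBot ℕ) →
      ∑ j ∈ range (k + 1), (-1 : F) ^ (k + j) * (k.choose j : F) * P.eval (j : F) = 0 := by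
  intro k
  induction k with
  | zero =>
    intro P hP
    have : P = 0 := Polynomial.degree_eq_bot.mp (Nat.WithBot.lt_zero_iff.mp (by exact_mod_cast hP))
    simp [this]
  | succ k ih =>
    intro P hP
    have h0 : P.degree ≤ (k : WithBot ℕ) := degree_le_of_lt_succ hP
    set Q := P.comp (X + C 1) - P with hQdef
    have hQ : Q.degree < (k : WithBot ℕ) := by
      rcases le_or_gt P.degree 0 with h | h
      · have hPC : P = C (P.coeff 0) := Polynomial.eq_C_of_degree_le_zero h
        have : Q = 0 := by rw [hQdef, hPC]; simp
        rw [this, Polynomial.degree_zero]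
        exact WithBot.bot_lt_coe k
      · have hP0 : P ≠ 0 := fun h' => by simp [h'] at h
        have hc0 : (X + C 1 : F[X]).natDegree = 1 := by
          simpa using Polynomial.natDegree_X_add_C (1 : F)
        have hcomp0 : P.comp (X + C 1) ≠ 0 := by
          intro hc
          apply hP0
          have := congrArg (fun q => q.comp (X - C 1)) hc
          simpa [Polynomial.comp_assoc, sub_add_cancel] using this
        have hdeg : (P.comp (X + C 1)).degree = P.degree := by
          rw [degree_eq_natDegree hcomp0, degree_eq_natDegree hP0, Polynomial.natDegree_comp,
            hc0, mul_one]
        have hlc : (P.comp (X + C 1)).leadingCoeff = P.leadingCoeff := by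
          rw [Polynomial.leadingCoeff_comp (by rw [hc0]; exact one_ne_zero)]
          rw [(Polynomial.monic_X_add_C (1:F)).leadingCoeff, one_pow, mul_one]
        have := Polynomial.degree_sub_lt hdeg hcomp0 hlc
        calc Q.degree < P.degree := by rw [hdeg] at this; exact this
        _ ≤ (k : WithBot ℕ) := h0
    have key := ih Q hQ
    have hQe : ∀ j : ℕ, Q.eval (j : F) = P.eval ((j:F) + 1) - P.eval (j : F) := by
      intro j; simp [hQdef, Polynomial.eval_comp]
    rw [Finset.sum_range_succ']
    have e1 : ∀ j ∈ range (k+1),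
        (-1:F)^(k+1+(j+1)) * (((k+1).choose (j+1) : ℕ) : F) * P.eval (((j+1:ℕ)) : F)
        = (-1:F)^(k+j) * (k.choose j : F) * P.eval ((j:F)+1)
          + (-1:F)^(k+j) * (k.choose (j+1) : F) * P.eval ((j:F)+1) := by
      intro j _
      have hsign : (-1:F)^(k+1+(j+1)) = (-1:F)^(k+j) := by
        rw [show k+1+(j+1) = (k+j)+2 by ring, pow_add, neg_one_sq, mul_one]
      rw [hsign, Nat.choose_succ_succ]
      push_cast
      ring
    rw [Finset.sum_congr rfl e1, Finset.sum_add_distrib]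
    have key2 : ∑ j ∈ range (k+1), (-1:F)^(k+j) * (k.choose j : F) * P.eval ((j:F)+1)
        = ∑ j ∈ range (k+1), (-1:F)^(k+j) * (k.choose j : F) * P.eval (j:F) := by
      simp only [hQe] at key
      have expand : ∑ j ∈ range (k+1),
          (-1:F)^(k+j) * (k.choose j : F) * (P.eval ((j:F)+1) - P.eval (j:F))
          = (∑ j ∈ range (k+1), (-1:F)^(k+j) * (k.choose j : F) * P.eval ((j:F)+1))
            - ∑ j ∈ range (k+1), (-1:F)^(k+j) * (k.choose j : F) * P.eval (j:F) := by
        rw [← Finset.sum_sub_distrib]; exact Finset.sum_congr rfl (fun j _ => by ring)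
      rw [expand] at key
      exact sub_eq_zero.mp key
    rw [key2]
    rw [Finset.sum_range_succ' (fun j => (-1:F)^(k+j) * (k.choose j : F) * P.eval (j:F)) k,
        Finset.sum_range_succ (fun j => (-1:F)^(k+j) * (k.choose (j+1) : F) * P.eval ((j:F)+1)) k]
    have hAB : ∑ j ∈ range k, ((-1:F)^(k+(j+1)) * (k.choose (j+1) : F) * P.eval (((j+1:ℕ)):F))
        = - ∑ j ∈ range k, ((-1:F)^(k+j) * (k.choose (j+1) : F) * P.eval ((j:F)+1)) := by
      rw [← Finset.sum_neg_distrib]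
      apply Finset.sum_congr rfl
      intro j _
      have : (((j+1:ℕ)):F) = (j:F)+1 := by push_cast; ring
      rw [this, show k+(j+1) = (k+j)+1 by ring, pow_succ]
      ring
    rw [hAB, Nat.choose_succ_self]
    simp only [Nat.choose_zero_right, Nat.cast_one, Nat.cast_zero, Nat.cast_ofNat, Nat.cast_zero]
    ring

private lemma newton_inner {F : Type*} [Field F] (m j : ℕ) (hj : j ≤ m) :
    ∑ k ∈ range (m+1), (m.choose k : F) * ((-1:F)^(k+j) * (k.choose j : F))
      = if j = m then 1 else 0 := by
  rw [Finset.range_eq_Ico,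
    ← Finset.sum_subset (Finset.Ico_subset_Ico (Nat.zero_le j) (le_refl (m+1)))
      (fun k hk hk' => ?_)]
  · rw [Finset.sum_Ico_eq_sum_range]
    have e : ∀ i ∈ range (m+1-j), (m.choose (j+i) : F) * ((-1:F)^((j+i)+j) * ((j+i).choose j : F))
        = (m.choose j : F) * ((-1:F)^i * ((m-j).choose i : F)) := by
      intro i hi
      have hi' : j + i ≤ m := by
        have := Finset.mem_range.mp hi; omega
      have hcc : m.choose (j+i) * (j+i).choose j = m.choose j * (m-j).choose i := by
        have := Nat.choose_mul (n := m) (k := j+i) (s := j) (Nat.le_add_right j i)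
        simpa using this
      have hsign : (-1:F)^((j+i)+j) = (-1:F)^i := by
        rw [show (j+i)+j = 2*j + i by ring, pow_add, pow_mul, neg_one_sq, one_pow, one_mul]
      calc (m.choose (j+i) : F) * ((-1:F)^((j+i)+j) * ((j+i).choose j : F))
          = (-1:F)^((j+i)+j) * ((m.choose (j+i) * (j+i).choose j : ℕ) : F) := by push_cast; ring
        _ = (-1:F)^i * ((m.choose j * (m-j).choose i : ℕ) : F) := by rw [hcc, hsign]
        _ = (m.choose j : F) * ((-1:F)^i * ((m-j).choose i : F)) := by push_cast; ring
    rw [Finset.sum_congr rfl e, ← Finset.mul_sum]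
    rw [show m+1-j = (m-j)+1 by omega, alt_sum_choose]
    rcases eq_or_ne j m with rfl | hne
    · simp
    · rw [if_neg (by omega), if_neg hne, mul_zero]
  · have hk2 : k < j := by
      simp only [Finset.mem_Ico, Finset.mem_range] at hk hk'
      omega
    rw [Nat.choose_eq_zero_of_lt hk2]
    simp
  -- note: range (m+1) = Ico 0 (m+1)

private lemma newton_inv {F : Type*} [Field F] (g : ℕ → F) (m : ℕ) :
    ∑ k ∈ range (m+1), (m.choose k : F) *
      (∑ j ∈ range (k+1), (-1:F)^(k+j) * (k.choose j : F) * g j) = g m := by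
  have step1 : ∀ k ∈ range (m+1),
      (m.choose k : F) * (∑ j ∈ range (k+1), (-1:F)^(k+j) * (k.choose j : F) * g j)
      = ∑ j ∈ range (m+1), (m.choose k : F) * ((-1:F)^(k+j) * (k.choose j : F)) * g j := by
    intro k hk
    rw [Finset.mul_sum]
    have hkm : k + 1 ≤ m + 1 := Finset.mem_range.mp hk
    rw [Finset.sum_subset (Finset.range_subset_range.mpr hkm) (fun j hj hj' => ?_)]
    · exact Finset.sum_congr rfl (fun j _ => by ring)
    · have : k < j := by
        simp only [Finset.mem_range] at hj hj'; omega
      rw [Nat.choose_eq_zero_of_lt this]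
      simp
  rw [Finset.sum_congr rfl step1, Finset.sum_comm]
  have step2 : ∀ j ∈ range (m+1),
      ∑ k ∈ range (m+1), (m.choose k : F) * ((-1:F)^(k+j) * (k.choose j : F)) * g j
      = (if j = m then 1 else 0) * g j := by
    intro j hj
    rw [← Finset.sum_mul, newton_inner m j (by have := Finset.mem_range.mp hj; omega)]
  rw [Finset.sum_congr rfl step2]
  simp

private lemma card_filter_powersetCard {X : Type*} [DecidableEq X] (B K : Finset X) (r : ℕ)
    (hKB : K ⊆ B) (hKr : K.card ≤ r) :
    ((Finset.powersetCard r B).filter (fun R => K ⊆ R)).card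
      = (B.card - K.card).choose (r - K.card) := by
  rw [← Finset.card_sdiff_of_subset hKB, ← Finset.card_powersetCard (r - K.card) (B \ K)]
  apply Finset.card_bij' (fun R _ => R \ K) (fun R' _ => R' ∪ K)
  · intro R hR
    simp only [Finset.mem_filter, Finset.mem_powersetCard] at hR ⊢
    obtain ⟨⟨hRB, hRc⟩, hKR⟩ := hR
    constructor
    · exact Finset.sdiff_subset_sdiff hRB (le_refl K)
    · rw [Finset.card_sdiff_of_subset hKR, hRc]
  · intro R' hR'
    simp only [Finset.mem_filter, Finset.mem_powersetCard] at hR' ⊢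
    obtain ⟨hR'B, hR'c⟩ := hR'
    have hdisj : Disjoint R' K := (Finset.sdiff_disjoint).mono_left hR'B
    refine ⟨⟨Finset.union_subset (hR'B.trans (Finset.sdiff_subset)) hKB, ?_⟩,
      Finset.subset_union_right⟩
    rw [Finset.card_union_of_disjoint hdisj, hR'c]
    omega
  · intro R hR
    simp only [Finset.mem_filter, Finset.mem_powersetCard] at hR
    exact Finset.sdiff_union_of_subset hR.2
  · intro R' hR'
    simp only [Finset.mem_powersetCard] at hR'
    have hdisj : Disjoint R' K := (Finset.sdiff_disjoint).mono_left hR'.1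
    exact Finset.union_sdiff_cancel_right hdisj

private lemma sum_powersetCard_choose {X : Type*} [DecidableEq X] (A B : Finset X) (r k : ℕ)
    (hk : k ≤ r) :
    ∑ R ∈ Finset.powersetCard r B, (A ∩ R).card.choose k
      = (A ∩ B).card.choose k * (B.card - k).choose (r - k) := by
  have e1 : ∀ R ∈ Finset.powersetCard r B,
      (A ∩ R).card.choose k = ∑ K ∈ Finset.powersetCard k (A ∩ B), (if K ⊆ R then 1 else 0) := by
    intro R hR
    have hRB : R ⊆ B := (Finset.mem_powersetCard.mp hR).1
    rw [← Finset.sum_filter]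
    have hfe : (Finset.powersetCard k (A ∩ B)).filter (fun K => K ⊆ R)
        = Finset.powersetCard k (A ∩ R) := by
      ext K
      simp only [Finset.mem_filter, Finset.mem_powersetCard, Finset.subset_inter_iff]
      constructor
      · rintro ⟨⟨⟨hKA, _⟩, hKc⟩, hKR⟩
        exact ⟨⟨hKA, hKR⟩, hKc⟩
      · rintro ⟨⟨hKA, hKR⟩, hKc⟩
        exact ⟨⟨⟨hKA, hKR.trans hRB⟩, hKc⟩, hKR⟩
    rw [hfe]
    simp [Finset.card_powersetCard]
  rw [Finset.sum_congr rfl e1, Finset.sum_comm]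
  have e2 : ∀ K ∈ Finset.powersetCard k (A ∩ B),
      ∑ R ∈ Finset.powersetCard r B, (if K ⊆ R then 1 else 0)
        = (B.card - k).choose (r - k) := by
    intro K hK
    have hKc : K.card = k := (Finset.mem_powersetCard.mp hK).2
    have hKB : K ⊆ B := (Finset.mem_powersetCard.mp hK).1.trans Finset.inter_subset_right
    rw [← Finset.sum_filter, Finset.sum_const, smul_eq_mul, mul_one,
      card_filter_powersetCard B K r hKB (hKc ▸ hk), hKc]
  rw [Finset.sum_congr rfl e2, Finset.sum_const, Finset.card_powersetCard, smul_eq_mul]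


/-- A matrix `M` over a field `F` represents a simple graph `G` if all diagonal entries are
nonzero and entries at distinct non-adjacent pairs of vertices are zero. -/
def Represents {V F : Type*} [Field F] (G : SimpleGraph V) (M : Matrix V V F) : Prop :=
  (∀ v, M v v ≠ 0) ∧ ∀ u v : V, u ≠ v → ¬G.Adj u v → M u v = 0

/-- The minrank of a simple graph `G` over a field `F`. -/
noncomputable def minrank (F : Type*) [Field F] {V : Type*} [Fintype V] [DecidableEq V]
    (G : SimpleGraph V) : ℕ :=
  sInf {r : ℕ | ∃ M : Matrix V V F, Represents G M ∧ M.rank = r}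

/-- The generalized Kneser graph `K(d, s, T)`: vertices are the `s`-subsets of `[d]`, and two
distinct sets are adjacent iff the size of their intersection lies in `T`. -/
def kneser (d s : ℕ) (T : Set ℕ) : SimpleGraph {A : Finset (Fin d) // A.card = s} where
  Adj A B := A ≠ B ∧ (A.1 ∩ B.1).card ∈ T
  symm := ⟨fun A B h => ⟨h.1.symm, by rw [Finset.inter_comm]; exact h.2⟩⟩
  loopless := ⟨fun A h => h.1 rfl⟩

/-- For `t ≤ s ≤ d`, a set `T ⊆ {0, 1, …, s-1}` of size `t`, and a prime `p > s`, the minrank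
of `K(d, s, T)` over `F_p` is at most `C(d, s - t)`. -/
theorem minrank_kneser_le_choose (d s t : ℕ) (T : Finset ℕ) (hT : ∀ i ∈ T, i < s)
    (hTcard : T.card = t) (hts : t ≤ s) (hsd : s ≤ d) (p : ℕ) [Fact p.Prime] (hps : s < p) :
    minrank (ZMod p) (kneser d s (T : Set ℕ)) ≤ d.choose (s - t) := by
  classical
  set F := ZMod p with hF
  set r := s - t with hr
  have hrs : r ≤ s := Nat.sub_le s t
  set S : Finset ℕ := (range s) \ T with hSdef
  have hTsub : T ⊆ range s := fun i hi => Finset.mem_range.mpr (hT i hi)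
  have hScard : S.card = r := by rw [hSdef, Finset.card_sdiff_of_subset hTsub, Finset.card_range, hTcard]
  set P : Polynomial F := ∏ i ∈ S, (X - C (i : F)) with hPdef
  have hPdeg : P.natDegree = r := by
    rw [hPdef, Polynomial.natDegree_prod_of_monic _ _ (fun i _ => Polynomial.monic_X_sub_C _)]
    simp only [Polynomial.natDegree_X_sub_C]
    rw [Finset.sum_const, hScard, smul_eq_mul, mul_one]
  have hPdegle : P.degree ≤ (r : WithBot ℕ) := hPdeg ▸ Polynomial.degree_le_natDegree
  set b : ℕ → F := fun k => ∑ j ∈ range (k+1), (-1:F)^(k+j) * (k.choose j : F) * P.eval (j:F)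
    with hbdef
  have hbzero : ∀ k, r < k → b k = 0 := fun k hk =>
    alt_sum_eval k P (lt_of_le_of_lt hPdegle (by exact_mod_cast hk))
  have hCne : ∀ k, k ≤ r → (((s-k).choose (r-k) : ℕ) : F) ≠ 0 := by
    intro k hk h0
    have hdvd : p ∣ (s-k).choose (r-k) := (ZMod.natCast_eq_zero_iff _ p).mp h0
    have hle : r - k ≤ s - k := by omega
    have heq := Nat.choose_mul_factorial_mul_factorial hle
    have hdvd2 : p ∣ (s-k).choose (r-k) * Nat.factorial (r-k) * Nat.factorial (s-k-(r-k)) :=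
      (hdvd.mul_right (Nat.factorial (r-k))).mul_right (Nat.factorial (s-k-(r-k)))
    rw [heq] at hdvd2
    have h1 := (Nat.Prime.dvd_factorial (Fact.out)).mp hdvd2
    omega
  set a : ℕ → F := fun k => b k * (((s-k).choose (r-k) : ℕ) : F)⁻¹ with hadef
  set W : Matrix {A : Finset (Fin d) // A.card = s} {R : Finset (Fin d) // R.card = r} F :=
    fun A R => ∑ k ∈ range (r+1), a k * (((A.1 ∩ R.1).card.choose k : ℕ) : F) with hWdef
  set Z : Matrix {R : Finset (Fin d) // R.card = r} {A : Finset (Fin d) // A.card = s} F :=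
    fun R B => if R.1 ⊆ B.1 then 1 else 0 with hZdef
  have hMval : ∀ A B : {A : Finset (Fin d) // A.card = s},
      (W * Z) A B = P.eval (((A.1 ∩ B.1).card : ℕ) : F) := by
    intro A B
    rw [Matrix.mul_apply]
    have e0 : ∀ R : {R : Finset (Fin d) // R.card = r}, W A R * Z R B =
        (fun Rf : Finset (Fin d) => if Rf ⊆ B.1 then
          (∑ k ∈ range (r+1), a k * (((A.1 ∩ Rf).card.choose k : ℕ) : F)) else 0) R.1 := by
      intro R
      simp only [hWdef, hZdef]
      by_cases h : R.1 ⊆ B.1 <;> simp [h]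
    rw [Finset.sum_congr rfl (fun R _ => e0 R)]
    rw [← Finset.sum_subtype (p := fun R : Finset (Fin d) => R.card = r)
      (Finset.powersetCard r (Finset.univ : Finset (Fin d)))
      (fun R => Finset.mem_powersetCard_univ)
      (fun Rf : Finset (Fin d) => if Rf ⊆ B.1 then
        ∑ k ∈ range (r+1), a k * (((A.1 ∩ Rf).card.choose k : ℕ) : F) else 0)]
    have hfilter : Finset.powersetCard r B.1
        = (Finset.powersetCard r (Finset.univ : Finset (Fin d))).filter (fun R => R ⊆ B.1) := by
      ext R
      simp only [Finset.mem_powersetCard, Finset.mem_filter, Finset.subset_univ, true_and]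
      tauto
    rw [← Finset.sum_filter, ← hfilter, Finset.sum_comm]
    have e2 : ∀ k ∈ range (r+1),
        ∑ R ∈ Finset.powersetCard r B.1, a k * (((A.1 ∩ R).card.choose k : ℕ) : F)
        = b k * (((A.1 ∩ B.1).card.choose k : ℕ) : F) := by
      intro k hk
      have hkr : k ≤ r := Nat.lt_succ_iff.mp (Finset.mem_range.mp hk)
      rw [← Finset.mul_sum, ← Nat.cast_sum, sum_powersetCard_choose A.1 B.1 r k hkr, B.2,
        hadef]
      have hC := hCne k hkr
      push_cast
      rw [mul_assoc, mul_comm (_ : F)⁻¹, mul_assoc, mul_inv_cancel₀ hC, mul_one]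
    rw [Finset.sum_congr rfl e2]
    have hms : (A.1 ∩ B.1).card ≤ s :=
      le_trans (Finset.card_le_card Finset.inter_subset_right) (le_of_eq B.2)
    have hz1 : ∀ k ∈ range (s+1), k ∉ range (r+1) →
        b k * ((((A.1 ∩ B.1).card).choose k : ℕ) : F) = 0 := by
      intro k hk hk'
      have : r < k := by
        simp only [Finset.mem_range] at hk hk'; omega
      rw [hbzero k this, zero_mul]
    rw [Finset.sum_subset (Finset.range_subset_range.mpr (Nat.succ_le_succ hrs)) hz1]
    have hz2 : ∀ k ∈ range (s+1), k ∉ range ((A.1 ∩ B.1).card + 1) →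
        b k * ((((A.1 ∩ B.1).card).choose k : ℕ) : F) = 0 := by
      intro k hk hk'
      have : (A.1 ∩ B.1).card < k := by
        simp only [Finset.mem_range] at hk hk'; omega
      rw [Nat.choose_eq_zero_of_lt this, Nat.cast_zero, mul_zero]
    rw [← Finset.sum_subset (Finset.range_subset_range.mpr (Nat.succ_le_succ hms)) hz2]
    have hnewton := newton_inv (fun j : ℕ => P.eval ((j:ℕ) : F)) ((A.1 ∩ B.1).card)
    rw [← hnewton]
    apply Finset.sum_congr rfl
    intro k _
    rw [hbdef]
    ring
  have hrep : Represents (kneser d s (T : Set ℕ)) (W * Z) := by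
    constructor
    · intro A
      rw [hMval A A, Finset.inter_self, A.2, hPdef, Polynomial.eval_prod]
      apply Finset.prod_ne_zero_iff.mpr
      intro i hi
      have his : i < s := Finset.mem_range.mp (Finset.mem_sdiff.mp hi).1
      simp only [Polynomial.eval_sub, Polynomial.eval_X, Polynomial.eval_C]
      rw [← Nat.cast_sub (le_of_lt his)]
      intro h0
      have hdvd := (ZMod.natCast_eq_zero_iff _ p).mp h0
      have := Nat.le_of_dvd (by omega) hdvd
      omega
    · intro u v huv hadj
      rw [hMval u v]
      have hmem : (u.1 ∩ v.1).card ∈ S := by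
        have h1 : (u.1 ∩ v.1).card ∉ T := fun hmT => hadj (And.intro huv (Finset.mem_coe.mpr hmT))
        have hle : (u.1 ∩ v.1).card ≤ s :=
          le_trans (Finset.card_le_card Finset.inter_subset_right) (le_of_eq v.2)
        have hne : (u.1 ∩ v.1).card ≠ s := by
          intro he
          apply huv
          apply Subtype.ext
          have h2 : u.1 ∩ v.1 = v.1 := Finset.eq_of_subset_of_card_le
            Finset.inter_subset_right (by rw [he, v.2])
          have h3 : u.1 ∩ v.1 = u.1 := Finset.eq_of_subset_of_card_le
            Finset.inter_subset_left (by rw [he, u.2])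
          rw [← h3, h2]
        rw [hSdef]
        exact Finset.mem_sdiff.mpr ⟨Finset.mem_range.mpr (by omega), h1⟩
      rw [hPdef, Polynomial.eval_prod]
      apply Finset.prod_eq_zero hmem
      simp
  have hrank : (W * Z).rank ≤ d.choose r := by
    calc (W * Z).rank ≤ Z.rank := Matrix.rank_mul_le_right W Z
    _ ≤ Fintype.card {R : Finset (Fin d) // R.card = r} := Matrix.rank_le_card_height Z
    _ = d.choose r := by rw [Fintype.card_finset_len, Fintype.card_fin]
  exact le_trans (Nat.sInf_le ⟨W * Z, hrep, rfl⟩) hrank
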